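/- If A : [0,1] → ℝ is continuous, positive, and strictly increasing, and θ solves θ̇ = −sin²θ − λA(t)cos²θ with θ(0) = π/2 and θ(1) = −π/2 for some λ > 0, then the unique zero t_m of θ satisfies t_m > 1/2. -/

import Mathlib

open Set Real

lemma sin_sq_sub_eq (u v : ℝ) :
    Real.sin u ^ 2 - Real.sin v ^ 2 = Real.sin (u+v) * Real.sin (u-v) := by
  rw [Real.sin_add, Real.sin_sub]
  have h1 := Real.sin_sq_add_cos_sq u
  have h2 := Real.sin_sq_add_cos_sq v
  ring_nf
  nlinarith [h1, h2]

lemma key_bound (c c' K u v : ℝ) (hc : 0 < c) (hc' : 0 < c') (hK : 1 + c ≤ K) :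
    (-(Real.sin u)^2 - c*(Real.cos u)^2) - (-(Real.sin v)^2 - c'*(Real.cos v)^2)
      ≤ K * |u + v| - (c - c') * (Real.cos v)^2 := by
  have hu := Real.sin_sq_add_cos_sq u
  have hv := Real.sin_sq_add_cos_sq v
  have hid := sin_sq_sub_eq u v
  have h2 : |Real.sin (u+v)| ≤ |u+v| := Real.abs_sin_le_abs
  have h3 : |Real.sin (u-v)| ≤ 1 := Real.abs_sin_le_one _
  have h4 : |c - 1| ≤ K := by
    rw [abs_le]; constructor <;> linarith
  have h5 : |Real.sin (u+v)| * |Real.sin (u-v)| ≤ |u+v| * 1 :=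
    mul_le_mul h2 h3 (abs_nonneg _) (abs_nonneg _)
  have h6 : |c-1| * (|Real.sin (u+v)| * |Real.sin (u-v)|) ≤ K * (|u+v| * 1) :=
    mul_le_mul h4 h5 (by positivity) (by linarith)
  have h7 : (c-1) * (Real.sin (u+v) * Real.sin (u-v)) ≤ K * |u+v| := by
    calc (c-1) * (Real.sin (u+v) * Real.sin (u-v))
        ≤ |(c-1) * (Real.sin (u+v) * Real.sin (u-v))| := le_abs_self _
      _ = |c-1| * (|Real.sin (u+v)| * |Real.sin (u-v)|) := by rw [abs_mul, abs_mul]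
      _ ≤ K * (|u+v| * 1) := h6
      _ = K * |u+v| := by ring
  nlinarith [h7]

theorem stmt18 (A θ : ℝ → ℝ) (lam tm : ℝ)
    (hlam : 0 < lam)
    (hA_cont : ContinuousOn A (Icc 0 1))
    (hA_pos : ∀ t ∈ Icc (0:ℝ) 1, 0 < A t)
    (hA_mono : StrictMonoOn A (Icc 0 1))
    (hθ : ∀ t ∈ Icc (0:ℝ) 1,
      HasDerivAt θ (-(Real.sin (θ t)) ^ 2 - lam * A t * (Real.cos (θ t)) ^ 2) t)
    (hθ0 : θ 0 = Real.pi / 2)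
    (hθ1 : θ 1 = -(Real.pi / 2))
    (htm : tm ∈ Ioo (0:ℝ) 1)
    (hθtm : θ tm = 0) :
    1 / 2 < tm := by
  by_contra hcon
  push_neg at hcon
  obtain ⟨htm0, htm1⟩ := htm
  have hb1 : 2 * tm ≤ 1 := by linarith
  have htmb : tm < 2 * tm := by linarith
  have hθcont : ContinuousOn θ (Icc 0 1) :=
    fun t ht => (hθ t ht).continuousAt.continuousWithinAt
  -- θ is strictly decreasing on [0,1]
  have hθanti : StrictAntiOn θ (Icc 0 1) := by
    apply strictAntiOn_of_deriv_neg (convex_Icc 0 1) hθcont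
    intro x hx
    rw [interior_Icc] at hx
    have hx' : x ∈ Icc (0:ℝ) 1 := Ioo_subset_Icc_self hx
    rw [(hθ x hx').deriv]
    have hc : 0 < lam * A x := mul_pos hlam (hA_pos x hx')
    have hid := Real.sin_sq_add_cos_sq (θ x)
    by_cases hcz : Real.cos (θ x) = 0
    · rw [hcz]
      have hs : Real.sin (θ x) ^ 2 = 1 := by rw [hcz] at hid; linarith
      rw [hs]; nlinarith
    · have h1 : 0 < Real.cos (θ x) ^ 2 := by positivity
      have h2 : 0 < lam * A x * Real.cos (θ x) ^ 2 := mul_pos hc h1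
      nlinarith [sq_nonneg (Real.sin (θ x))]
  have hA1 : 0 < A 1 := hA_pos 1 ⟨zero_le_one, le_refl 1⟩
  set K : ℝ := 1 + lam * A 1 with hKdef
  have hKpos : 0 < K := by positivity
  -- membership facts
  have hmem1 : ∀ t ∈ Icc tm (2*tm), t ∈ Icc (0:ℝ) 1 :=
    fun t ht => ⟨by linarith [ht.1], by linarith [ht.2]⟩
  have hmem2 : ∀ t ∈ Icc tm (2*tm), 2*tm - t ∈ Icc (0:ℝ) 1 :=
    fun t ht => ⟨by linarith [ht.2], by linarith [ht.1]⟩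
  set d : ℝ → ℝ := fun t => θ t + θ (2*tm - t) with hddef
  set D : ℝ → ℝ := fun t =>
    (-(Real.sin (θ t)) ^ 2 - lam * A t * (Real.cos (θ t)) ^ 2)
      - (-(Real.sin (θ (2*tm - t))) ^ 2 - lam * A (2*tm - t) * (Real.cos (θ (2*tm - t))) ^ 2)
    with hDdef
  have hd' : ∀ t ∈ Icc tm (2*tm), HasDerivAt d (D t) t := by
    intro t ht
    have h1 := hθ t (hmem1 t ht)
    have h2 := hθ (2*tm - t) (hmem2 t ht)
    have hinner : HasDerivAt (fun t : ℝ => 2*tm - t) (-1) t := by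
      simpa using (hasDerivAt_id' t).const_sub (2*tm)
    have h3 := HasDerivAt.comp t h2 hinner
    have := h1.add h3
    refine this.congr_deriv ?_
    simp [hDdef]
    ring
  have hdcont : ContinuousOn d (Icc tm (2*tm)) :=
    fun t ht => (hd' t ht).continuousAt.continuousWithinAt
  -- key differential inequality
  have hDbound : ∀ t ∈ Icc tm (2*tm),
      D t ≤ K * |d t| - lam * (A t - A (2*tm - t)) * (Real.cos (θ (2*tm - t)))^2 := by
    intro t ht
    have hAt : 0 < A t := hA_pos t (hmem1 t ht)
    have hAs : 0 < A (2*tm - t) := hA_pos _ (hmem2 t ht)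
    have hAle : A t ≤ A 1 := by
      rcases eq_or_lt_of_le (hmem1 t ht).2 with h | h
      · rw [h]
      · exact le_of_lt (hA_mono (hmem1 t ht) ⟨zero_le_one, le_refl 1⟩ h)
    have hKle : 1 + lam * A t ≤ K := by
      have : lam * A t ≤ lam * A 1 := by nlinarith
      simp [hKdef]; linarith
    have := key_bound (lam * A t) (lam * A (2*tm - t)) K (θ t) (θ (2*tm - t))
      (by positivity) (by positivity) hKle
    simp only [hDdef, hddef]
    calc (-(Real.sin (θ t)) ^ 2 - lam * A t * (Real.cos (θ t)) ^ 2)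
          - (-(Real.sin (θ (2*tm - t))) ^ 2 - lam * A (2*tm - t) * (Real.cos (θ (2*tm - t))) ^ 2)
        ≤ K * |θ t + θ (2*tm - t)|
            - (lam * A t - lam * A (2*tm - t)) * (Real.cos (θ (2*tm - t)))^2 := by
          convert this using 2 <;> ring
      _ = K * |θ t + θ (2*tm - t)|
            - lam * (A t - A (2*tm - t)) * (Real.cos (θ (2*tm - t)))^2 := by ring
  -- the reflected-difference term is nonnegative
  have hAdiff_nonneg : ∀ t ∈ Icc tm (2*tm),
      0 ≤ lam * (A t - A (2*tm - t)) * (Real.cos (θ (2*tm - t)))^2 := by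
    intro t ht
    have hle : A (2*tm - t) ≤ A t := by
      rcases eq_or_lt_of_le (by linarith [ht.1] : 2*tm - t ≤ t) with h | h
      · rw [h]
      · exact le_of_lt (hA_mono (hmem2 t ht) (hmem1 t ht) h)
    have : 0 ≤ A t - A (2*tm - t) := by linarith
    positivity
  have hdtm : d tm = 0 := by
    have h2 : 2*tm - tm = tm := by ring
    simp only [hddef, h2, hθtm]; ring
  -- Step 1: d ≤ 0 on [tm, 2tm]
  have hd_nonpos : ∀ x ∈ Icc tm (2*tm), d x ≤ 0 := by
    intro x hx
    have hεbound : ∀ ε : ℝ, 0 < ε → d x ≤ ε * Real.exp ((K+1)*(x - tm)) := by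
      intro ε hε
      set B : ℝ → ℝ := fun t => ε * Real.exp ((K+1)*(t - tm)) with hBdef
      have hB' : ∀ t : ℝ, HasDerivAt B ((K+1) * B t) t := by
        intro t
        have h1 : HasDerivAt (fun t : ℝ => (K+1)*(t - tm)) (K+1) t := by
          simpa using ((hasDerivAt_id t).sub (hasDerivAt_const t tm)).const_mul (K+1)
        have := (h1.exp).const_mul ε
        refine this.congr_deriv ?_
        simp [hBdef]; ring
      have hBpos : ∀ t, 0 < B t := fun t => by positivity
      have := image_le_of_deriv_right_lt_deriv_boundary (f := d) (f' := D)
        hdcont (fun t ht => (hd' t (Ico_subset_Icc_self ht)).hasDerivWithinAt)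
        (by rw [hdtm]; exact le_of_lt (hBpos tm))
        hB'
        (fun t ht heq => by
          have hb1 := hDbound t (Ico_subset_Icc_self ht)
          have hb2 := hAdiff_nonneg t (Ico_subset_Icc_self ht)
          have habs : |d t| = B t := by rw [heq, abs_of_pos (hBpos t)]
          have : D t ≤ K * B t := by rw [← habs]; linarith
          nlinarith [hBpos t])
      have := this hx
      simpa [hBdef] using this
    set C := Real.exp ((K+1)*(x - tm)) with hCdef
    have hCpos : 0 < C := Real.exp_pos _
    refine le_of_forall_pos_le_add (fun ε hε => ?_)
    have h0 := hεbound (ε / C) (by positivity)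
    have heq : ε / C * C = ε := div_mul_cancel₀ _ (ne_of_gt hCpos)
    rw [heq] at h0
    linarith
  -- Step 2: strict inequality at 2*tm via an exponentially weighted function
  set e : ℝ → ℝ := fun t => d t * Real.exp (K * t) with hedef
  have he' : ∀ t ∈ Icc tm (2*tm),
      HasDerivAt e ((D t + K * d t) * Real.exp (K * t)) t := by
    intro t ht
    have h1 : HasDerivAt (fun t : ℝ => Real.exp (K * t)) (Real.exp (K * t) * K) t := by
      simpa using ((hasDerivAt_id' t).const_mul K).exp
    have := (hd' t ht).mul h1
    refine this.congr_deriv ?_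
    ring
  have hecont : ContinuousOn e (Icc tm (2*tm)) :=
    fun t ht => (he' t ht).continuousAt.continuousWithinAt
  have heanti : StrictAntiOn e (Icc tm (2*tm)) := by
    apply strictAntiOn_of_deriv_neg (convex_Icc _ _) hecont
    intro x hx
    rw [interior_Icc] at hx
    have hx' : x ∈ Icc tm (2*tm) := Ioo_subset_Icc_self hx
    rw [(he' x hx').deriv]
    have hb1 := hDbound x hx'
    have hd0 := hd_nonpos x hx'
    have habs : |d x| = -(d x) := abs_of_nonpos hd0
    -- strict positivity of the A-difference term on the open interval
    have hs0 : 0 < 2*tm - x := by linarith [hx.2]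
    have hstm : 2*tm - x < tm := by linarith [hx.1]
    have hsmem : 2*tm - x ∈ Icc (0:ℝ) 1 := hmem2 x hx'
    have hAlt : A (2*tm - x) < A x := hA_mono hsmem (hmem1 x hx') (by linarith [hx.1])
    have hθs_pos : 0 < θ (2*tm - x) := by
      have := hθanti hsmem ⟨le_of_lt htm0, le_of_lt htm1⟩ hstm
      rw [hθtm] at this; linarith
    have hθs_lt : θ (2*tm - x) < Real.pi / 2 := by
      have := hθanti ⟨le_refl 0, zero_le_one⟩ hsmem hs0
      rw [hθ0] at this; linarith
    have hcos_pos : 0 < Real.cos (θ (2*tm - x)) := by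
      apply Real.cos_pos_of_mem_Ioo
      constructor
      · linarith [Real.pi_pos]
      · exact hθs_lt
    have hterm : 0 < lam * (A x - A (2*tm - x)) * (Real.cos (θ (2*tm - x)))^2 := by
      have : 0 < A x - A (2*tm - x) := by linarith
      positivity
    have hDK : D x + K * d x < 0 := by
      rw [habs] at hb1; linarith
    have hexp : 0 < Real.exp (K * x) := Real.exp_pos _
    nlinarith
  have hlt : e (2*tm) < e tm :=
    heanti ⟨le_refl tm, le_of_lt htmb⟩ ⟨le_of_lt htmb, le_refl _⟩ htmb
  have hetm : e tm = 0 := by simp [hedef, hdtm]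
  have hd2tm : d (2*tm) < 0 := by
    rw [hetm] at hlt
    have hee : d (2*tm) * Real.exp (K * (2*tm)) < 0 := hlt
    have hexp : 0 < Real.exp (K * (2*tm)) := Real.exp_pos _
    by_contra h
    push_neg at h
    nlinarith [mul_nonneg h hexp.le]
  -- conclude: θ (2tm) < -π/2 = θ 1 ≤ θ (2tm)
  have h2tm0 : 2*tm - 2*tm = 0 := by ring
  have hθ2tm : θ (2*tm) + Real.pi/2 < 0 := by
    have : d (2*tm) = θ (2*tm) + θ 0 := by simp [hddef, h2tm0]
    rw [this, hθ0] at hd2tm; linarith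
  have hge : θ 1 ≤ θ (2*tm) := by
    rcases eq_or_lt_of_le hb1 with h | h
    · rw [h]
    · exact le_of_lt (hθanti ⟨by linarith, hb1⟩ ⟨zero_le_one, le_refl 1⟩ h)
  rw [hθ1] at hge
  linarith
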